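/- In the binary potential outcomes model with marginals p₀ = P(Y₀=1), p₁ = P(Y₁=1), the singleton {0} is a valid (1−α) prediction interval for Y₁−Y₀ under every compatible joint distribution if and only if p₀ + p₁ ≤ α or (1−p₀) + (1−p₁) ≤ α. -/
import Mathlib


noncomputable def val (b : Bool) : ℝ := if b then 1 else 0

/-- A joint pmf on `{0,1}²`; `P a b` is the probability that `Y₀ = a` and `Y₁ = b`,
with marginals `P(Y₀ = 1) = p₀` and `P(Y₁ = 1) = p₁`. -/
def IsJoint (p₀ p₁ : ℝ) (P : Bool → Bool → ℝ) : Prop :=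
  (∀ a b, 0 ≤ P a b) ∧ (∑ a : Bool, ∑ b : Bool, P a b) = 1 ∧
    (P true true + P true false = p₀) ∧ (P true true + P false true = p₁)

/-- `P(Y₁ - Y₀ = δ)` under the joint pmf `P`. -/
noncomputable def probΔ (P : Bool → Bool → ℝ) (δ : ℝ) : ℝ :=
  ∑ a : Bool, ∑ b : Bool, if val b - val a = δ then P a b else 0

lemma probΔ_zero (P : Bool → Bool → ℝ) :
    probΔ P 0 = P false false + P true true := by
  simp [probΔ, val, Fintype.sum_bool]
  ring

/-- `{0}` is a valid `(1-α)` prediction interval for `Y₁ - Y₀` under every compatible joint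
iff `p₀ + p₁ ≤ α` or `(1-p₀) + (1-p₁) ≤ α`. -/
theorem stmt_6 (p₀ p₁ α : ℝ) (hα0 : 0 < α) (hα : α < 1 / 2)
    (h₀ : 0 ≤ p₀) (h₀' : p₀ ≤ 1) (h₁ : 0 ≤ p₁) (h₁' : p₁ ≤ 1) :
    (∀ P : Bool → Bool → ℝ, IsJoint p₀ p₁ P → 1 - α ≤ probΔ P 0) ↔
      (p₀ + p₁ ≤ α ∨ (1 - p₀) + (1 - p₁) ≤ α) := by
  constructor
  · intro h
    by_cases hs : p₀ + p₁ ≤ 1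
    · left
      set P : Bool → Bool → ℝ := fun a b =>
        if a then (if b then 0 else p₀) else (if b then p₁ else 1 - p₀ - p₁) with hP
      have hj : IsJoint p₀ p₁ P := by
        refine ⟨?_, ?_, ?_, ?_⟩
        · rintro (_|_) (_|_) <;> simp [hP] <;> linarith
        · simp [hP, Fintype.sum_bool]; try ring
        · simp [hP]
        · simp [hP]
      have := h P hj
      rw [probΔ_zero] at this
      simp [hP] at this
      linarith
    · right
      set P : Bool → Bool → ℝ := fun a b =>
        if a then (if b then p₀ + p₁ - 1 else 1 - p₁) else (if b then 1 - p₀ else 0) with hP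
      have hj : IsJoint p₀ p₁ P := by
        refine ⟨?_, ?_, ?_, ?_⟩
        · rintro (_|_) (_|_) <;> simp [hP] <;> linarith
        · simp [hP, Fintype.sum_bool]; try ring
        · simp [hP]; try ring
        · simp [hP]; try ring
      have := h P hj
      rw [probΔ_zero] at this
      simp [hP] at this
      linarith
  · rintro h P ⟨hpos, hsum, hm0, hm1⟩
    rw [probΔ_zero]
    simp [Fintype.sum_bool] at hsum
    have h1 := hpos true true
    have h2 := hpos true false
    have h3 := hpos false true
    have h4 := hpos false false
    rcases h with h | h
    · linarith
    · linarith
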